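/- Let n = 2^k·r with r odd, and let A_t be a Cayley-Dickson algebra over K with trace form T_C = <1> ⊥ T_P. If the quadratic form (2^k + 1) × <1> ⊥ (n-1) × T_P is isotropic over K, then the level of A_t satisfies s(A_t) ≤ n. -/

import Mathlib

open Finset Matrix

namespace St17

variable {K : Type} [Field K]

/-- The key matrix property. -/
def Good (K : Type) [Field K] (ι : Type) [Fintype ι] [DecidableEq ι] : Prop :=
  ∀ e : K, (∃ x : ι → K, e = ∑ j, x j ^ 2) →
    ∃ R : Matrix ι ι K, Rᵀ * R = e • 1 ∧ R * Rᵀ = e • 1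

lemma double_mat {ι : Type} [Fintype ι] [DecidableEq ι]
    (a b : K) (ha : a ≠ 0) (A B : Matrix ι ι K)
    (hA1 : Aᵀ * A = a • 1) (hA2 : A * Aᵀ = a • 1)
    (hB1 : Bᵀ * B = b • 1) (hB2 : B * Bᵀ = b • 1) :
    ∃ R : Matrix (ι ⊕ ι) (ι ⊕ ι) K,
      Rᵀ * R = (a + b) • 1 ∧ R * Rᵀ = (a + b) • 1 := by
  have hA1' : ∀ X : Matrix ι ι K, Aᵀ * (A * X) = a • X := fun X => by
    rw [← Matrix.mul_assoc, hA1, Matrix.smul_mul, Matrix.one_mul]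
  have hA2' : ∀ X : Matrix ι ι K, A * (Aᵀ * X) = a • X := fun X => by
    rw [← Matrix.mul_assoc, hA2, Matrix.smul_mul, Matrix.one_mul]
  have hB1' : ∀ X : Matrix ι ι K, Bᵀ * (B * X) = b • X := fun X => by
    rw [← Matrix.mul_assoc, hB1, Matrix.smul_mul, Matrix.one_mul]
  have hB2' : ∀ X : Matrix ι ι K, B * (Bᵀ * X) = b • X := fun X => by
    rw [← Matrix.mul_assoc, hB2, Matrix.smul_mul, Matrix.one_mul]
  refine ⟨Matrix.fromBlocks A (-(a⁻¹ • (A * (Bᵀ * A)))) B A, ?_, ?_⟩ <;>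
    rw [Matrix.fromBlocks_transpose, Matrix.fromBlocks_multiply,
      show ((a+b) • (1 : Matrix (ι ⊕ ι) (ι ⊕ ι) K))
        = Matrix.fromBlocks ((a+b) • 1) 0 0 ((a+b) • 1) by
        rw [← Matrix.fromBlocks_one, Matrix.fromBlocks_smul, smul_zero],
      Matrix.fromBlocks_inj] <;>
    refine ⟨?_, ?_, ?_, ?_⟩ <;>
    simp only [Matrix.transpose_neg, Matrix.transpose_smul, Matrix.transpose_mul,
      Matrix.transpose_transpose, Matrix.mul_neg, Matrix.neg_mul, Matrix.mul_smul,
      Matrix.smul_mul, Matrix.mul_assoc, hA1', hB1', hA2', hB2', hA1, hA2, hB1, hB2,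
      smul_smul, Matrix.mul_one, smul_neg, neg_neg, inv_mul_cancel₀ ha, one_smul,
      neg_add_cancel, add_neg_cancel] <;>
    (try simp) <;> (try rw [← add_smul]) <;> (try congr 1) <;> (try field_simp) <;> (try ring)

lemma good_equiv {ι κ : Type} [Fintype ι] [DecidableEq ι] [Fintype κ] [DecidableEq κ]
    (σ : ι ≃ κ) (h : Good K ι) : Good K κ := by
  rintro e ⟨x, hx⟩
  obtain ⟨R, h1, h2⟩ := h e ⟨fun j => x (σ j), by
    rw [hx]; exact (Fintype.sum_equiv σ (fun j => x (σ j) ^ 2) (fun j => x j ^ 2)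
      (fun j => rfl)).symm⟩
  refine ⟨R.submatrix σ.symm σ.symm, ?_, ?_⟩ <;>
    rw [Matrix.transpose_submatrix, Matrix.submatrix_mul_equiv]
  · rw [h1]; ext i j; simp [Matrix.one_apply]
  · rw [h2]; ext i j; simp [Matrix.one_apply]

lemma good_one : Good K (Fin 1) := by
  rintro e ⟨x, hx⟩
  refine ⟨x 0 • 1, ?_, ?_⟩ <;>
    rw [Matrix.transpose_smul, Matrix.transpose_one, Matrix.smul_mul, Matrix.mul_smul,
      Matrix.one_mul, smul_smul, hx, Fin.sum_univ_one, ← sq]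

lemma good_sum {ι : Type} [Fintype ι] [DecidableEq ι] (h : Good K ι) :
    Good K (ι ⊕ ι) := by
  rintro e ⟨x, hx⟩
  have he : e = (∑ j : ι, x (Sum.inl j) ^ 2) + ∑ j : ι, x (Sum.inr j) ^ 2 := by
    rw [hx, Fintype.sum_sum_type]
  set a := ∑ j : ι, x (Sum.inl j) ^ 2 with hadef
  set b := ∑ j : ι, x (Sum.inr j) ^ 2 with hbdef
  obtain ⟨A, hA1, hA2⟩ := h a ⟨fun j => x (Sum.inl j), hadef⟩
  obtain ⟨B, hB1, hB2⟩ := h b ⟨fun j => x (Sum.inr j), hbdef⟩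
  by_cases ha : a ≠ 0
  · obtain ⟨R, hR1, hR2⟩ := double_mat a b ha A B hA1 hA2 hB1 hB2
    exact ⟨R, by rw [hR1, he], by rw [hR2, he]⟩
  · push_neg at ha
    by_cases hb : b ≠ 0
    · obtain ⟨R, hR1, hR2⟩ := double_mat b a hb B A hB1 hB2 hA1 hA2
      exact ⟨R, by rw [hR1, he, add_comm], by rw [hR2, he, add_comm]⟩
    · push_neg at hb
      refine ⟨0, ?_, ?_⟩ <;>
        simp [he, ha, hb]

lemma good_pow : ∀ k : ℕ, Good K (Fin (2 ^ k)) := by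
  intro k
  induction k with
  | zero => exact good_one
  | succ k ih =>
      have h2 : (2 : ℕ) ^ k + 2 ^ k = 2 ^ (k + 1) := by rw [pow_succ, mul_two]
      exact good_equiv (finSumFinEquiv.trans (finCongr h2)) (good_sum ih)

lemma exists_orth (n k r : ℕ) (hn : n = 2 ^ k * r) (N : K)
    (hN : ∃ x : Fin (2 ^ k) → K, N = ∑ j, x j ^ 2) :
    ∃ S : Matrix (Fin n) (Fin n) K, Sᵀ * S = N • 1 := by
  obtain ⟨R, hR, -⟩ := good_pow k N hN
  set B := Matrix.blockDiagonal (fun _ : Fin r => R) with hBdef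
  have hB : Bᵀ * B = N • 1 := by
    rw [hBdef, Matrix.blockDiagonal_transpose, ← Matrix.blockDiagonal_mul]
    have : (fun kk : Fin r => Rᵀ * R) = fun _ : Fin r => (N • 1 : Matrix (Fin (2^k)) (Fin (2^k)) K) := by
      funext kk; exact hR
    rw [this]
    rw [show (fun _ : Fin r => (N • 1 : Matrix (Fin (2^k)) (Fin (2^k)) K))
        = N • (1 : Fin r → Matrix (Fin (2^k)) (Fin (2^k)) K) from rfl,
      Matrix.blockDiagonal_smul, Matrix.blockDiagonal_one]
  set σ : Fin (2 ^ k) × Fin r ≃ Fin n := finProdFinEquiv.trans (finCongr hn.symm) with hσ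
  refine ⟨B.submatrix σ.symm σ.symm, ?_⟩
  rw [Matrix.transpose_submatrix, Matrix.submatrix_mul_equiv, hB]
  ext i j; simp [Matrix.one_apply]

end St17

/-- An algebra `A` of dimension `2 ^ t` over a field `K` obtained by the Cayley-Dickson
process: it has a basis `{1, f₂, …, f_q}`, `q = 2 ^ t` (indexed here by
`Option (Fin (2 ^ t - 1))`, with `none` corresponding to the unit `1`), such that
`fᵢ² = αᵢ • 1` for nonzero scalars `αᵢ` and `fᵢ fⱼ = -fⱼ fᵢ` for `i ≠ j`.  The
multiplication is not assumed associative, but is `K`-bilinear. -/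
structure CayleyDickson (K : Type) [Field K] (A : Type) [NonAssocRing A] [Module K A]
    (t : ℕ) : Type where
  smul_mul : ∀ (c : K) (x y : A), (c • x) * y = c • (x * y)
  mul_smul : ∀ (c : K) (x y : A), x * (c • y) = c • (x * y)
  b : Module.Basis (Option (Fin (2 ^ t - 1))) K A
  bOne : b none = 1
  α : Fin (2 ^ t - 1) → K
  α_ne_zero : ∀ i, α i ≠ 0
  sq : ∀ i, b (some i) * b (some i) = α i • (1 : A)
  anticomm : ∀ i j, i ≠ j → b (some i) * b (some j) = -(b (some j) * b (some i))


namespace St17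
section Alg

variable {K A : Type} [Field K] [NonAssocRing A] [Module K A] {t : ℕ}

lemma sum_fin_eq {M : Type} [AddCommMonoid M] {n n' : ℕ} (h : n' + 1 = n) (g : Fin n → M) :
    ∑ m, g m = g (finCongr h 0) + ∑ l : Fin n', g (finCongr h l.succ) := by
  calc ∑ m, g m = ∑ m' : Fin (n' + 1), g (finCongr h m') :=
        (Fintype.sum_equiv (finCongr h) (fun m' => g (finCongr h m')) g (fun _ => rfl)).symm
    _ = _ := Fin.sum_univ_succ _

lemma sq_elt (CD : CayleyDickson K A t) (hchar : (2 : K) ≠ 0)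
    (c : K) (Y : Fin (2 ^ t - 1) → K) :
    (c • (1 : A) + ∑ i, Y i • CD.b (some i)) * (c • (1 : A) + ∑ i, Y i • CD.b (some i))
      = (c ^ 2 + ∑ i, CD.α i * Y i ^ 2) • (1 : A)
        + ∑ i, (2 * (c * Y i)) • CD.b (some i) := by
  have h_uu : (c • (1 : A)) * (c • (1 : A)) = (c * c) • (1 : A) := by
    rw [CD.smul_mul, CD.mul_smul, one_mul, smul_smul]
  have h_uv : (c • (1 : A)) * (∑ i, Y i • CD.b (some i)) = ∑ i, (c * Y i) • CD.b (some i) := by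
    rw [Finset.mul_sum]
    refine Finset.sum_congr rfl fun i _ => ?_
    rw [CD.mul_smul, CD.smul_mul, one_mul, smul_smul, mul_comm (Y i) c]
  have h_vu : (∑ i, Y i • CD.b (some i)) * (c • (1 : A)) = ∑ i, (c * Y i) • CD.b (some i) := by
    rw [Finset.sum_mul]
    refine Finset.sum_congr rfl fun i _ => ?_
    rw [CD.smul_mul, CD.mul_smul, mul_one, smul_smul, mul_comm (Y i) c]
  have h_vv : (∑ i, Y i • CD.b (some i)) * (∑ i, Y i • CD.b (some i))
      = ∑ i, (CD.α i * Y i ^ 2) • (1 : A) := by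
    rw [Finset.sum_mul]
    have hrow : ∀ i : Fin (2 ^ t - 1), (Y i • CD.b (some i)) * (∑ j, Y j • CD.b (some j))
        = ∑ j, (Y i * Y j) • (CD.b (some i) * CD.b (some j)) := by
      intro i; rw [Finset.mul_sum]
      refine Finset.sum_congr rfl fun j _ => ?_
      rw [CD.mul_smul, CD.smul_mul, smul_smul, mul_comm (Y j) (Y i)]
    rw [Finset.sum_congr rfl fun i _ => hrow i]
    have key : ∑ i, ∑ j, (Y i * Y j) • (CD.b (some i) * CD.b (some j))
        = ∑ i, (Y i * Y i) • (CD.b (some i) * CD.b (some i)) := by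
      have h2 : (2 : K) • (∑ i, ∑ j, (Y i * Y j) • (CD.b (some i) * CD.b (some j)))
          = (2 : K) • ∑ i, (Y i * Y i) • (CD.b (some i) * CD.b (some i)) := by
        calc (2 : K) • (∑ i, ∑ j, (Y i * Y j) • (CD.b (some i) * CD.b (some j)))
            = (∑ i, ∑ j, (Y i * Y j) • (CD.b (some i) * CD.b (some j)))
              + (∑ i, ∑ j, (Y j * Y i) • (CD.b (some j) * CD.b (some i))) := by
              rw [two_smul]; congr 1; exact Finset.sum_comm
          _ = ∑ i, ∑ j, ((Y i * Y j) • (CD.b (some i) * CD.b (some j))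
              + (Y j * Y i) • (CD.b (some j) * CD.b (some i))) := by
              rw [← Finset.sum_add_distrib]
              exact Finset.sum_congr rfl fun i _ => (Finset.sum_add_distrib).symm
          _ = ∑ i, ∑ j, (if j = i then (2 : K) • ((Y i * Y i) • (CD.b (some i) * CD.b (some i))) else 0) := by
              refine Finset.sum_congr rfl fun i _ => Finset.sum_congr rfl fun j _ => ?_
              by_cases hij : j = i
              · subst hij; rw [if_pos rfl, two_smul]
              · rw [if_neg hij, CD.anticomm j i hij, mul_comm (Y j) (Y i), smul_neg,
                  add_neg_cancel]
          _ = ∑ i, (2 : K) • ((Y i * Y i) • (CD.b (some i) * CD.b (some i))) := by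
              refine Finset.sum_congr rfl fun i _ => ?_
              rw [Finset.sum_ite_eq' Finset.univ i
                (fun _ => (2 : K) • ((Y i * Y i) • (CD.b (some i) * CD.b (some i)))),
                if_pos (Finset.mem_univ i)]
          _ = (2 : K) • ∑ i, (Y i * Y i) • (CD.b (some i) * CD.b (some i)) :=
              (Finset.smul_sum).symm
      have h3 := congrArg (fun z : A => (2 : K)⁻¹ • z) h2
      simpa [smul_smul, inv_mul_cancel₀ hchar] using h3
    rw [key]
    refine Finset.sum_congr rfl fun i _ => ?_
    rw [CD.sq i, smul_smul]
    congr 1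
    ring
  rw [add_mul, mul_add, mul_add, h_uu, h_uv, h_vu, h_vv]
  have hscal : (c * c) • (1 : A) + ∑ i, (CD.α i * Y i ^ 2) • (1 : A)
      = (c ^ 2 + ∑ i, CD.α i * Y i ^ 2) • (1 : A) := by
    rw [← Finset.sum_smul, ← add_smul, sq]
  have hvec : (∑ i, (c * Y i) • CD.b (some i)) + ∑ i, (c * Y i) • CD.b (some i)
      = ∑ i, (2 * (c * Y i)) • CD.b (some i) := by
    rw [← Finset.sum_add_distrib]
    refine Finset.sum_congr rfl fun i _ => ?_
    rw [← add_smul, two_mul]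
  calc (c * c) • (1 : A) + ∑ i, (c * Y i) • CD.b (some i)
        + (∑ i, (c * Y i) • CD.b (some i) + ∑ i, (CD.α i * Y i ^ 2) • (1 : A))
      = ((c * c) • (1 : A) + ∑ i, (CD.α i * Y i ^ 2) • (1 : A))
        + ((∑ i, (c * Y i) • CD.b (some i)) + ∑ i, (c * Y i) • CD.b (some i)) := by abel
    _ = _ := by rw [hscal, hvec]

lemma build (CD : CayleyDickson K A t) (hchar : (2 : K) ≠ 0) {n : ℕ}
    (c : Fin n → K) (Y : Fin n → Fin (2 ^ t - 1) → K)
    (h1 : ∑ m, (c m ^ 2 + ∑ i, CD.α i * Y m i ^ 2) = -1)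
    (h2 : ∀ i, ∑ m, c m * Y m i = 0) :
    ∃ f : Fin n → A, ∑ m, f m * f m = -1 := by
  refine ⟨fun m => c m • (1 : A) + ∑ i, Y m i • CD.b (some i), ?_⟩
  calc ∑ m, (c m • (1 : A) + ∑ i, Y m i • CD.b (some i))
        * (c m • (1 : A) + ∑ i, Y m i • CD.b (some i))
      = ∑ m, ((c m ^ 2 + ∑ i, CD.α i * Y m i ^ 2) • (1 : A)
          + ∑ i, (2 * (c m * Y m i)) • CD.b (some i)) :=
        Finset.sum_congr rfl fun m _ => sq_elt CD hchar (c m) (Y m)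
    _ = (∑ m, (c m ^ 2 + ∑ i, CD.α i * Y m i ^ 2)) • (1 : A)
        + ∑ i, (∑ m, 2 * (c m * Y m i)) • CD.b (some i) := by
        rw [Finset.sum_add_distrib, Finset.sum_smul]
        congr 1
        rw [Finset.sum_comm]
        exact Finset.sum_congr rfl fun m _ => (Finset.sum_smul).symm
    _ = -1 := by
        rw [h1]
        have hz : ∀ i ∈ Finset.univ, (∑ m, 2 * (c m * Y m i)) • CD.b (some i) = (0 : A) :=
          fun i _ => by rw [← Finset.mul_sum, h2 i, mul_zero, zero_smul]
        rw [Finset.sum_congr rfl hz, Finset.sum_const_zero, add_zero, neg_smul, one_smul]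

lemma build_pure (CD : CayleyDickson K A t) (hchar : (2 : K) ≠ 0) {n : ℕ} (hn0 : 0 < n)
    (z : Fin (n - 1) → Fin (2 ^ t - 1) → K)
    (hz : ∑ l, ∑ i, CD.α i * z l i ^ 2 = -1) :
    ∃ f : Fin n → A, ∑ m, f m * f m = -1 := by
  have hsn : (n - 1) + 1 = n := Nat.succ_pred_eq_of_pos hn0
  apply build CD hchar (fun _ => (0 : K))
    (fun m => Fin.cases (0 : Fin (2 ^ t - 1) → K) z ((finCongr hsn).symm m))
  · rw [sum_fin_eq hsn]
    simp only [Equiv.symm_apply_apply, Fin.cases_zero, Fin.cases_succ]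
    simpa using hz
  · intro i; simp

end Alg

end St17

/-- Let `n = 2 ^ k · r` with `r` odd.  If the quadratic form
`(2 ^ k + 1) × <1> ⊥ (n - 1) × T_P` is isotropic over `K`, then the level of the
Cayley-Dickson algebra `A_t` satisfies `s(A_t) ≤ n`, i.e. `-1` is a sum of `n` squares. -/
theorem level_le_n_of_isotropic (K A : Type) [Field K] [NonAssocRing A] [Module K A]
    (t n k r : ℕ) (hchar : (2 : K) ≠ 0) (CD : CayleyDickson K A t)
    (hn : n = 2 ^ k * r) (hr : Odd r) (hn0 : 0 < n)
    (hiso : ∃ (x : Fin (2 ^ k + 1) → K) (y : Fin (n - 1) → Fin (2 ^ t - 1) → K),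
      (x ≠ 0 ∨ y ≠ 0) ∧
      ∑ j, x j ^ 2 + ∑ m, ∑ i, CD.α i * y m i ^ 2 = 0) :
    ∃ f : Fin n → A, ∑ i, f i * f i = -1 := by
  classical
  obtain ⟨x, y, hnz, hrel⟩ := hiso
  by_cases hx : x = 0
  · -- the pure form is isotropic, hence universal
    have hy : y ≠ 0 := hnz.resolve_left (not_not.mpr hx)
    have hQ : ∑ m, ∑ i, CD.α i * y m i ^ 2 = 0 := by
      have h := hrel
      rw [hx] at h
      simpa using h
    obtain ⟨m₀, hm₀⟩ := Function.ne_iff.mp hy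
    obtain ⟨i₀, hi₀⟩ := Function.ne_iff.mp hm₀
    set β := CD.α i₀ * y m₀ i₀ with hβdef
    have hβ : β ≠ 0 := by rw [hβdef]; exact mul_ne_zero (CD.α_ne_zero i₀) hi₀
    set lam := (-1 - CD.α i₀) / (2 * β) with hlamdef
    refine St17.build_pure CD hchar hn0
      (fun l i => lam * y l i + (if l = m₀ ∧ i = i₀ then 1 else 0)) ?_
    show ∑ l, ∑ i, CD.α i * (lam * y l i + (if l = m₀ ∧ i = i₀ then 1 else 0)) ^ 2 = -1
    have hterm : ∀ (l : Fin (n - 1)) (i : Fin (2 ^ t - 1)),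
        CD.α i * (lam * y l i + (if l = m₀ ∧ i = i₀ then 1 else 0)) ^ 2
        = lam ^ 2 * (CD.α i * y l i ^ 2)
          + (if l = m₀ ∧ i = i₀ then 2 * (lam * β) + CD.α i₀ else 0) := by
      intro l i
      by_cases hli : l = m₀ ∧ i = i₀
      · obtain ⟨rfl, rfl⟩ := hli
        rw [if_pos ⟨rfl, rfl⟩, if_pos ⟨rfl, rfl⟩, hβdef]
        ring
      · rw [if_neg hli, if_neg hli]
        ring
    rw [Finset.sum_congr rfl fun l (_ : l ∈ Finset.univ) =>
      Finset.sum_congr rfl fun i _ => hterm l i]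
    rw [Finset.sum_congr rfl fun l (_ : l ∈ Finset.univ) => Finset.sum_add_distrib,
      Finset.sum_add_distrib]
    have hA : ∑ l : Fin (n - 1), ∑ i, lam ^ 2 * (CD.α i * y l i ^ 2) = 0 := by
      rw [Finset.sum_congr rfl fun l (_ : l ∈ Finset.univ) => (Finset.mul_sum _ _ _).symm,
        ← Finset.mul_sum, hQ, mul_zero]
    have hB : ∑ l : Fin (n - 1), ∑ i,
        (if l = m₀ ∧ i = i₀ then 2 * (lam * β) + CD.α i₀ else 0)
        = 2 * (lam * β) + CD.α i₀ := by
      have hinner : ∀ l : Fin (n - 1),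
          ∑ i, (if l = m₀ ∧ i = i₀ then 2 * (lam * β) + CD.α i₀ else 0)
          = if l = m₀ then 2 * (lam * β) + CD.α i₀ else 0 := by
        intro l
        by_cases hl : l = m₀
        · subst hl
          simp [Finset.sum_ite_eq']
        · simp [hl]
      rw [Finset.sum_congr rfl fun l _ => hinner l]
      simp [Finset.sum_ite_eq']
    rw [hA, hB, zero_add, hlamdef]
    field_simp
    ring
  · obtain ⟨j₀, hj₀⟩ := Function.ne_iff.mp hx
    replace hj₀ : x j₀ ≠ 0 := by simpa using hj₀
    set e := ∑ i : Fin (2 ^ k), x (j₀.succAbove i) ^ 2 with hedef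
    have hsplit : ∑ j, x j ^ 2 = x j₀ ^ 2 + e := Fin.sum_univ_succAbove (fun j => x j ^ 2) j₀
    have hrel' : x j₀ ^ 2 + e + ∑ m, ∑ i, CD.α i * y m i ^ 2 = 0 := by
      rw [← hsplit]; exact hrel
    by_cases he : e = 0
    · -- pure case, rescaling the y's
      refine St17.build_pure CD hchar hn0 (fun l i => y l i * (x j₀)⁻¹) ?_
      show ∑ l, ∑ i, CD.α i * (y l i * (x j₀)⁻¹) ^ 2 = -1
      have hterm : ∀ (l : Fin (n - 1)) (i : Fin (2 ^ t - 1)),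
          CD.α i * (y l i * (x j₀)⁻¹) ^ 2
          = (CD.α i * y l i ^ 2) * ((x j₀)⁻¹) ^ 2 := fun l i => by ring
      rw [Finset.sum_congr rfl fun l (_ : l ∈ Finset.univ) =>
        Finset.sum_congr rfl fun i _ => hterm l i]
      rw [Finset.sum_congr rfl fun l (_ : l ∈ Finset.univ) => (Finset.sum_mul _ _ _).symm,
        ← Finset.sum_mul]
      have hQ : ∑ m, ∑ i, CD.α i * y m i ^ 2 = -(x j₀ ^ 2) := by
        rw [he] at hrel'
        linear_combination hrel'
      rw [hQ]
      field_simp [hj₀]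
      try ring
    · -- MAIN case
      set N := x j₀ ^ 2 * e⁻¹ with hNdef
      have hrep : N = ∑ j : Fin (2 ^ k), (x j₀ * x (j₀.succAbove j) * e⁻¹) ^ 2 := by
        rw [Finset.sum_congr rfl fun j (_ : j ∈ Finset.univ) =>
          (show (x j₀ * x (j₀.succAbove j) * e⁻¹) ^ 2
            = (x j₀ * e⁻¹) ^ 2 * x (j₀.succAbove j) ^ 2 by ring), ← Finset.mul_sum, ← hedef,
          hNdef]
        field_simp
      obtain ⟨S, hS⟩ := St17.exists_orth n k r hn N ⟨_, hrep⟩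
      have horth : ∀ p q : Fin n, ∑ m, S m p * S m q = if p = q then N else 0 := by
        intro p q
        have h := congrFun (congrFun hS p) q
        simpa [Matrix.mul_apply, Matrix.transpose_apply, Matrix.one_apply, Matrix.smul_apply,
          mul_ite, mul_one, mul_zero] using h
      have hsn : (n - 1) + 1 = n := Nat.succ_pred_eq_of_pos hn0
      set z₀ : Fin n := finCongr hsn 0 with hz₀
      set em : Fin (n - 1) → Fin n := fun l => finCongr hsn l.succ with hem
      have hem0 : ∀ l, z₀ ≠ em l := by
        intro l h
        rw [hz₀, hem] at h
        exact Fin.succ_ne_zero l ((finCongr hsn).injective h.symm)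
      have hemInj : ∀ l l' : Fin (n - 1), em l = em l' ↔ l = l' := by
        intro l l'
        constructor
        · intro h
          rw [hem] at h
          exact Fin.succ_injective _ ((finCongr hsn).injective h)
        · rintro rfl; rfl
      refine St17.build CD hchar (fun m => S m z₀)
        (fun m i => ∑ l, S m (em l) * (y l i * (x j₀)⁻¹)) ?_ ?_
      · show ∑ m, (S m z₀ ^ 2 + ∑ i, CD.α i * (∑ l, S m (em l) * (y l i * (x j₀)⁻¹)) ^ 2) = -1
        rw [Finset.sum_add_distrib]
        have hpart1 : ∑ m, S m z₀ ^ 2 = N := by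
          have h := horth z₀ z₀
          rw [if_pos rfl] at h
          rw [← h]
          exact Finset.sum_congr rfl fun m _ => pow_two _
        have hpart2 : ∑ m, ∑ i, CD.α i * (∑ l, S m (em l) * (y l i * (x j₀)⁻¹)) ^ 2
            = N * ((∑ l, ∑ i, CD.α i * y l i ^ 2) * ((x j₀)⁻¹) ^ 2) := by
          calc ∑ m, ∑ i, CD.α i * (∑ l, S m (em l) * (y l i * (x j₀)⁻¹)) ^ 2
              = ∑ i, ∑ m, CD.α i * (∑ l, S m (em l) * (y l i * (x j₀)⁻¹)) ^ 2 :=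
                Finset.sum_comm
            _ = ∑ i, CD.α i * ∑ m, (∑ l, S m (em l) * (y l i * (x j₀)⁻¹)) ^ 2 :=
                Finset.sum_congr rfl fun i _ => (Finset.mul_sum _ _ _).symm
            _ = ∑ i, CD.α i * ∑ m, ∑ l, ∑ l',
                  (S m (em l) * (y l i * (x j₀)⁻¹)) * (S m (em l') * (y l' i * (x j₀)⁻¹)) := by
                refine Finset.sum_congr rfl fun i _ => ?_
                congr 1
                refine Finset.sum_congr rfl fun m _ => ?_
                rw [pow_two, Finset.sum_mul_sum]
            _ = ∑ i, CD.α i * ∑ l, ∑ l',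
                  (∑ m, S m (em l) * S m (em l'))
                    * ((y l i * (x j₀)⁻¹) * (y l' i * (x j₀)⁻¹)) := by
                refine Finset.sum_congr rfl fun i _ => ?_
                congr 1
                rw [Finset.sum_comm]
                refine Finset.sum_congr rfl fun l _ => ?_
                rw [Finset.sum_comm]
                refine Finset.sum_congr rfl fun l' _ => ?_
                rw [Finset.sum_mul]
                exact Finset.sum_congr rfl fun m _ => mul_mul_mul_comm _ _ _ _
            _ = ∑ i, CD.α i * ∑ l, N * ((y l i * (x j₀)⁻¹) * (y l i * (x j₀)⁻¹)) := by
                refine Finset.sum_congr rfl fun i _ => ?_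
                congr 1
                refine Finset.sum_congr rfl fun l _ => ?_
                calc ∑ l', (∑ m, S m (em l) * S m (em l'))
                      * ((y l i * (x j₀)⁻¹) * (y l' i * (x j₀)⁻¹))
                    = ∑ l', if l = l' then N * ((y l i * (x j₀)⁻¹) * (y l' i * (x j₀)⁻¹))
                        else 0 := by
                      refine Finset.sum_congr rfl fun l' _ => ?_
                      rw [horth (em l) (em l'), if_congr (hemInj l l') rfl rfl, ite_mul,
                        zero_mul]
                  _ = N * ((y l i * (x j₀)⁻¹) * (y l i * (x j₀)⁻¹)) := by
                      rw [Finset.sum_ite_eq Finset.univ l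
                        (fun l' => N * ((y l i * (x j₀)⁻¹) * (y l' i * (x j₀)⁻¹))),
                        if_pos (Finset.mem_univ l)]
            _ = ∑ i, ∑ l, N * ((x j₀)⁻¹) ^ 2 * (CD.α i * y l i ^ 2) := by
                refine Finset.sum_congr rfl fun i _ => ?_
                rw [Finset.mul_sum]
                exact Finset.sum_congr rfl fun l _ => by ring
            _ = N * ((x j₀)⁻¹) ^ 2 * ∑ i, ∑ l, CD.α i * y l i ^ 2 := by
                rw [Finset.mul_sum]
                exact Finset.sum_congr rfl fun i _ => (Finset.mul_sum _ _ _).symm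
            _ = N * ((∑ l, ∑ i, CD.α i * y l i ^ 2) * ((x j₀)⁻¹) ^ 2) := by
                rw [Finset.sum_comm]
                ring
        rw [hpart1, hpart2]
        have hQ : ∑ l : Fin (n - 1), ∑ i, CD.α i * y l i ^ 2 = -(x j₀ ^ 2) - e := by
          linear_combination hrel'
        rw [hQ, hNdef]
        field_simp [hj₀, he]
        ring
      · intro i
        show ∑ m, S m z₀ * ∑ l, S m (em l) * (y l i * (x j₀)⁻¹) = 0
        calc ∑ m, S m z₀ * ∑ l, S m (em l) * (y l i * (x j₀)⁻¹)
            = ∑ m, ∑ l, S m z₀ * (S m (em l) * (y l i * (x j₀)⁻¹)) :=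
              Finset.sum_congr rfl fun m _ => Finset.mul_sum _ _ _
          _ = ∑ l, ∑ m, S m z₀ * (S m (em l) * (y l i * (x j₀)⁻¹)) := Finset.sum_comm
          _ = ∑ l, (∑ m, S m z₀ * S m (em l)) * (y l i * (x j₀)⁻¹) := by
              refine Finset.sum_congr rfl fun l _ => ?_
              rw [Finset.sum_mul]
              exact Finset.sum_congr rfl fun m _ => (mul_assoc _ _ _).symm
          _ = 0 := by
              refine Finset.sum_eq_zero fun l _ => ?_
              rw [horth z₀ (em l), if_neg (hem0 l), zero_mul]
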